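/- With notation as before, dim_k((A_a^+)_i ∩ ker e_{-1}) = 1 if i ∈ {3, 5, ..., p} (i odd), and = 0 if i ∈ {4, 6, ..., p−1} (i even), where A_a^+ = A_a/span{x_1^i − x_2^i : 1 ≤ i ≤ p−1} is the antisymmetric part of the top level, graded by total degree. -/

import Mathlib

set_option synthInstance.maxHeartbeats 1000000
set_option maxHeartbeats 1000000

/-- The action of the Witt-algebra basis element `e_j = x^{j+1}∂` on
`A(1) = k[X]/(X^p)`, in coordinates w.r.t. the monomial basis `x^0, …, x^{p-1}`:
`e_j · x^a = a·x^{a+j}` (terms with exponent out of range `[0, p-1]` vanish). -/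
noncomputable def wittOp1 (p : ℕ) (k : Type) [Field k] (j : ℤ) :
    (Fin p → k) →ₗ[k] (Fin p → k) :=
  Matrix.toLin' (Matrix.of fun m r : Fin p =>
    if (r : ℤ) = (m : ℤ) - j then (((m : ℤ) - j : ℤ) : k) else 0)

/-- The action of the Witt-algebra basis element `e_j` on
`A_{(2)} = k[X₁,X₂]/(X₁^p, X₂^p)`, in coordinates w.r.t. the monomial basis
`x₁^a x₂^b`: `e_j · f = x₁^{j+1} ∂f/∂x₁ + x₂^{j+1} ∂f/∂x₂`, i.e.
`e_j · (x₁^a x₂^b) = a·x₁^{a+j}x₂^b + b·x₁^a x₂^{b+j}` (out-of-range terms vanish). -/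
noncomputable def wittOp2 (p : ℕ) (k : Type) [Field k] (j : ℤ) :
    (Fin p × Fin p → k) →ₗ[k] (Fin p × Fin p → k) :=
  Matrix.toLin' (Matrix.of fun q r : Fin p × Fin p =>
    (if (r.1 : ℤ) = (q.1 : ℤ) - j ∧ r.2 = q.2 then (((q.1 : ℤ) - j : ℤ) : k) else 0) +
    (if r.1 = q.1 ∧ (r.2 : ℤ) = (q.2 : ℤ) - j then (((q.2 : ℤ) - j : ℤ) : k) else 0))

/-- The degree-`i` graded component `A_i` of `A_{(2)}`: the span of the monomials
`x₁^a x₂^b` with `a + b = i`. -/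
def degComp (p : ℕ) (k : Type) [Field k] (i : ℕ) : Submodule k (Fin p × Fin p → k) where
  carrier := {f | ∀ q : Fin p × Fin p, (q.1 : ℕ) + (q.2 : ℕ) ≠ i → f q = 0}
  add_mem' := by intro f g hf hg q hq; simp [hf q hq, hg q hq]
  zero_mem' := by intro q hq; rfl
  smul_mem' := by intro c f hf q hq; simp [hf q hq]

/-- The symmetric part `A_s` of `A_{(2)} = A(1) ⊗ A(1)`: polynomials invariant under
swapping `x₁` and `x₂`. -/
def symmPart (p : ℕ) (k : Type) [Field k] : Submodule k (Fin p × Fin p → k) where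
  carrier := {f | ∀ q : Fin p × Fin p, f (q.2, q.1) = f q}
  add_mem' := by intro f g hf hg q; simp [hf q, hg q]
  zero_mem' := by intro q; rfl
  smul_mem' := by intro c f hf q; simp [hf q]

/-- The antisymmetric part `A_a` of `A_{(2)} = A(1) ⊗ A(1)`: polynomials negated by
swapping `x₁` and `x₂`. -/
def antisymmPart (p : ℕ) (k : Type) [Field k] : Submodule k (Fin p × Fin p → k) where
  carrier := {f | ∀ q : Fin p × Fin p, f (q.2, q.1) = - f q}
  add_mem' := by intro f g hf hg q; simp only [Set.mem_setOf_eq] at *;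
                 simp [hf q, hg q]; ring
  zero_mem' := by intro q; simp
  smul_mem' := by intro c f hf q; simp only [Set.mem_setOf_eq] at *; simp [hf q]

/-- The monomial `x₁^a x₂^b` of `A_{(2)}` (for `a, b ≤ p-1`), as a coordinate
function. -/
def mono (p : ℕ) (k : Type) [Field k] (a b : ℕ) : Fin p × Fin p → k :=
  fun q => if (q.1 : ℕ) = a ∧ (q.2 : ℕ) = b then 1 else 0

/-- The submodule `A_s' = span{x₁^i + x₂^i : 0 ≤ i ≤ p-1}` of `A_{(2)}`. -/
noncomputable def symmPrime (p : ℕ) (k : Type) [Field k] : Submodule k (Fin p × Fin p → k) :=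
  Submodule.span k (Set.range fun i : Fin p => mono p k i 0 + mono p k 0 i)

/-- The submodule `A_a' = span{x₁^i − x₂^i : 1 ≤ i ≤ p-1}` of `A_{(2)}`. -/
noncomputable def antisymmPrime (p : ℕ) (k : Type) [Field k] : Submodule k (Fin p × Fin p → k) :=
  Submodule.span k {g | ∃ i : Fin p, (i : ℕ) ≠ 0 ∧ g = mono p k i 0 - mono p k 0 i}

lemma wittE (p : ℕ) (k : Type) [Field k] (f : Fin p × Fin p → k) (q : Fin p × Fin p) :
    wittOp2 p k (-1) f q =
      (if h : (q.1 : ℕ) + 1 < p then (((q.1 : ℕ) + 1 : ℕ) : k) * f (⟨(q.1:ℕ)+1, h⟩, q.2) else 0) +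
      (if h : (q.2 : ℕ) + 1 < p then (((q.2 : ℕ) + 1 : ℕ) : k) * f (q.1, ⟨(q.2:ℕ)+1, h⟩) else 0) := by
  simp only [wittOp2, Matrix.toLin'_apply, Matrix.mulVec, dotProduct, Matrix.of_apply]
  have split : ∀ x : Fin p × Fin p,
      ((if ((x.1:ℕ):ℤ) = ((q.1:ℕ):ℤ) - (-1) ∧ x.2 = q.2 then ((((q.1:ℕ):ℤ) - (-1) : ℤ) : k) else 0) +
        if x.1 = q.1 ∧ ((x.2:ℕ):ℤ) = ((q.2:ℕ):ℤ) - (-1) then ((((q.2:ℕ):ℤ) - (-1) : ℤ) : k) else 0) * f x =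
      (if ((x.1:ℕ):ℤ) = ((q.1:ℕ):ℤ) - (-1) ∧ x.2 = q.2 then ((((q.1:ℕ):ℤ) - (-1) : ℤ) : k) * f x else 0) +
      (if x.1 = q.1 ∧ ((x.2:ℕ):ℤ) = ((q.2:ℕ):ℤ) - (-1) then ((((q.2:ℕ):ℤ) - (-1) : ℤ) : k) * f x else 0) := by
    intro x; split_ifs <;> ring
  rw [Finset.sum_congr rfl fun x _ => split x, Finset.sum_add_distrib]
  congr 1
  · by_cases h : (q.1 : ℕ) + 1 < p
    · rw [dif_pos h]
      have key : ∀ x : Fin p × Fin p,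
          (((x.1:ℕ):ℤ) = ((q.1:ℕ):ℤ) - (-1) ∧ x.2 = q.2) ↔ x = (⟨(q.1:ℕ)+1, h⟩, q.2) := by
        intro x
        constructor
        · rintro ⟨h1, h2⟩
          have : (x.1 : ℕ) = (q.1 : ℕ) + 1 := by omega
          exact Prod.ext (Fin.ext this) h2
        · rintro rfl; exact ⟨by push_cast; ring, rfl⟩
      simp only [key]
      rw [Finset.sum_ite_eq' Finset.univ ((⟨(q.1:ℕ)+1, h⟩, q.2) : Fin p × Fin p)
        (fun x => ((((q.1:ℕ):ℤ) - (-1) : ℤ) : k) * f x), if_pos (Finset.mem_univ _)]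
      push_cast; ring
    · rw [dif_neg h]
      refine Finset.sum_eq_zero fun x _ => ?_
      rw [if_neg]
      rintro ⟨h1, -⟩
      have := x.1.isLt
      omega
  · by_cases h : (q.2 : ℕ) + 1 < p
    · rw [dif_pos h]
      have key : ∀ x : Fin p × Fin p,
          (x.1 = q.1 ∧ ((x.2:ℕ):ℤ) = ((q.2:ℕ):ℤ) - (-1)) ↔ x = (q.1, ⟨(q.2:ℕ)+1, h⟩) := by
        intro x
        constructor
        · rintro ⟨h1, h2⟩
          have : (x.2 : ℕ) = (q.2 : ℕ) + 1 := by omega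
          exact Prod.ext h1 (Fin.ext this)
        · rintro rfl; exact ⟨rfl, by push_cast; ring⟩
      simp only [key]
      rw [Finset.sum_ite_eq' Finset.univ ((q.1, ⟨(q.2:ℕ)+1, h⟩) : Fin p × Fin p)
        (fun x => ((((q.2:ℕ):ℤ) - (-1) : ℤ) : k) * f x), if_pos (Finset.mem_univ _)]
      push_cast; ring
    · rw [dif_neg h]
      refine Finset.sum_eq_zero fun x _ => ?_
      rw [if_neg]
      rintro ⟨-, h2⟩
      have := x.2.isLt
      omega

noncomputable def ccST (k : Type) [Field k] (i : ℕ) : ℕ → k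
  | 0 => 0
  | 1 => 1
  | (b+2) => -((((i - (b+1)) : ℕ) : k) / (((b+2) : ℕ) : k)) * ccST k i (b+1)

lemma ccST_rec (k : Type) [Field k] (i b : ℕ) (hb : 1 ≤ b) (hbp : (((b+1 : ℕ)) : k) ≠ 0) :
    (((i - b : ℕ)) : k) * ccST k i b + (((b+1 : ℕ)) : k) * ccST k i (b+1) = 0 := by
  obtain ⟨m, rfl⟩ : ∃ m, b = m + 1 := ⟨b - 1, by omega⟩
  have hrw : ccST k i (m+2) = -((((i - (m+1)) : ℕ) : k) / (((m+2) : ℕ) : k)) * ccST k i (m+1) := rfl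
  rw [show m + 1 + 1 = m + 2 by omega] at hbp ⊢
  rw [hrw]
  have h2 : (((m+2 : ℕ)) : k) ≠ 0 := hbp
  have key : (((m+2:ℕ)):k) * (-((((i-(m+1)) : ℕ):k) / (((m+2):ℕ):k)) * ccST k i (m+1))
      = -((((i-(m+1)) : ℕ):k) * ccST k i (m+1)) := by
    field_simp
  rw [key]
  ring

lemma natCast_ne_zero_ST (p : ℕ) (k : Type) [Field k] [CharP k p] (hp : p.Prime)
    (n : ℕ) (h0 : n ≠ 0) (hn : n < p) : ((n : ℕ) : k) ≠ 0 := by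
  intro h
  rw [CharP.cast_eq_zero_iff k p n] at h
  have := Nat.le_of_dvd (Nat.pos_of_ne_zero h0) h
  omega

lemma mem_degComp_ST (p : ℕ) (k : Type) [Field k] (i : ℕ) (f : Fin p × Fin p → k) :
    f ∈ degComp p k i ↔ ∀ q : Fin p × Fin p, (q.1 : ℕ) + (q.2 : ℕ) ≠ i → f q = 0 := Iff.rfl

lemma mem_antisymmPart_ST (p : ℕ) (k : Type) [Field k] (f : Fin p × Fin p → k) :
    f ∈ antisymmPart p k ↔ ∀ q : Fin p × Fin p, f (q.2, q.1) = - f q := Iff.rfl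

lemma prime_vanish_ST (p : ℕ) (k : Type) [Field k] (f : Fin p × Fin p → k)
    (hf : f ∈ antisymmPrime p k) :
    ∀ q : Fin p × Fin p, 1 ≤ (q.1 : ℕ) → 1 ≤ (q.2 : ℕ) → f q = 0 := by
  refine Submodule.span_induction ?_ ?_ ?_ ?_ hf
  · rintro g ⟨j, hj, rfl⟩ q h1 h2
    simp only [Pi.sub_apply, mono]
    rw [if_neg (by rintro ⟨ha, hb⟩; omega), if_neg (by rintro ⟨ha, hb⟩; omega)]
    ring
  · intro q _ _; rfl
  · intro g h _ _ hg hh q h1 h2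
    simp [Pi.add_apply, hg q h1 h2, hh q h1 h2]
  · intro c g _ hg q h1 h2
    simp [Pi.smul_apply, hg q h1 h2]

lemma mem_prime_of_ST (p : ℕ) (k : Type) [Field k] (i : ℕ) (hi1 : 1 ≤ i) (hip : i ≤ p)
    (f : Fin p × Fin p → k) (hanti : f ∈ antisymmPart p k) (hdeg : f ∈ degComp p k i)
    (hvan : ∀ q : Fin p × Fin p, 1 ≤ (q.1 : ℕ) → 1 ≤ (q.2 : ℕ) → f q = 0) :
    f ∈ antisymmPrime p k := by
  have hp0 : 0 < p := by omega
  rcases lt_or_eq_of_le hip with hlt | rfl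
  · -- i < p : f = f(i,0) • (mono i 0 - mono 0 i)
    have hmem : (mono p k i 0 - mono p k 0 i : Fin p × Fin p → k) ∈ antisymmPrime p k := by
      apply Submodule.subset_span
      exact ⟨⟨i, hlt⟩, by simpa using Nat.one_le_iff_ne_zero.mp hi1, rfl⟩
    have : f = f (⟨i, hlt⟩, ⟨0, hp0⟩) • (mono p k i 0 - mono p k 0 i) := by
      funext q
      simp only [Pi.smul_apply, Pi.sub_apply, mono, smul_eq_mul]
      rcases Nat.eq_zero_or_pos (q.2 : ℕ) with h2 | h2
      · rcases Nat.eq_zero_or_pos (q.1 : ℕ) with h1 | h1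
        · -- q = (0,0)
          rw [if_neg (by omega), if_neg (by omega)]
          have := hdeg q (by omega)
          simpa using this
        · by_cases hq : (q.1 : ℕ) = i
          · rw [if_pos ⟨hq, h2⟩, if_neg (by omega)]
            have : q = (⟨i, hlt⟩, ⟨0, hp0⟩) := by
              refine Prod.ext (Fin.ext hq) (Fin.ext h2)
            rw [this]; ring
          · rw [if_neg (by tauto), if_neg (by omega)]
            have := hdeg q (by omega)
            simpa using this
      · rcases Nat.eq_zero_or_pos (q.1 : ℕ) with h1 | h1
        · by_cases hq : (q.2 : ℕ) = i
          · rw [if_neg (by omega), if_pos ⟨h1, hq⟩]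
            have hqe : q = ((⟨0, hp0⟩ : Fin p), (⟨i, hlt⟩ : Fin p)) :=
              Prod.ext (Fin.ext h1) (Fin.ext hq)
            have hsw := hanti ((⟨i, hlt⟩ : Fin p), (⟨0, hp0⟩ : Fin p))
            simp only at hsw
            rw [hqe]
            rw [show ((⟨0, hp0⟩ : Fin p), (⟨i, hlt⟩ : Fin p)) =
              (((⟨i, hlt⟩ : Fin p), (⟨0, hp0⟩ : Fin p)).2, ((⟨i, hlt⟩ : Fin p), (⟨0, hp0⟩ : Fin p)).1) from rfl, hsw]
            ring
          · rw [if_neg (by omega), if_neg (by tauto)]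
            have := hdeg q (by omega)
            simpa using this
        · rw [if_neg (by omega), if_neg (by omega)]
          simpa using hvan q h1 h2
    rw [this]
    exact Submodule.smul_mem _ _ hmem
  · -- i = p : f = 0
    have : f = 0 := by
      funext q
      rcases Nat.eq_zero_or_pos (q.1 : ℕ) with h1 | h1
      · exact hdeg q (by have := q.2.isLt; omega)
      · rcases Nat.eq_zero_or_pos (q.2 : ℕ) with h2 | h2
        · exact hdeg q (by have := q.1.isLt; omega)
        · exact hvan q h1 h2
    rw [this]; exact Submodule.zero_mem _

lemma wittE_anti_ST (p : ℕ) (k : Type) [Field k] (f : Fin p × Fin p → k)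
    (hf : f ∈ antisymmPart p k) : wittOp2 p k (-1) f ∈ antisymmPart p k := by
  have hf' : ∀ x y : Fin p, f (y, x) = - f (x, y) := fun x y => hf (x, y)
  rw [mem_antisymmPart_ST]
  rintro ⟨a, b⟩
  simp only
  rw [wittE, wittE]
  simp only
  split_ifs with h1 h2 h2'
  · rw [hf' a ⟨(b:ℕ)+1, h1⟩, hf' ⟨(a:ℕ)+1, h2⟩ b]; ring
  · rw [hf' a ⟨(b:ℕ)+1, h1⟩]; ring
  · rw [hf' ⟨(a:ℕ)+1, h2'⟩ b]; ring
  · ring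

lemma wittE_deg_ST (p : ℕ) (k : Type) [Field k] (i : ℕ) (hi : 1 ≤ i)
    (f : Fin p × Fin p → k) (hf : f ∈ degComp p k i) :
    wittOp2 p k (-1) f ∈ degComp p k (i-1) := by
  rw [mem_degComp_ST]
  rintro ⟨a, b⟩ hq
  have hq' : (a:ℕ) + (b:ℕ) ≠ i - 1 := hq
  rw [wittE]
  simp only
  split_ifs with h1 h2 h2'
  · rw [hf (⟨(a:ℕ)+1, h1⟩, b) (show (a:ℕ)+1+(b:ℕ) ≠ i by omega),
       hf (a, ⟨(b:ℕ)+1, h2⟩) (show (a:ℕ)+((b:ℕ)+1) ≠ i by omega)]; ring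
  · rw [hf (⟨(a:ℕ)+1, h1⟩, b) (show (a:ℕ)+1+(b:ℕ) ≠ i by omega)]; ring
  · rw [hf (a, ⟨(b:ℕ)+1, h2'⟩) (show (a:ℕ)+((b:ℕ)+1) ≠ i by omega)]; ring
  · ring

/-- the explicit lowest-weight vector in odd degree `i` -/
noncomputable def ffST (p : ℕ) (k : Type) [Field k] (i : ℕ) : Fin p × Fin p → k :=
  fun q => if (q.1 : ℕ) + (q.2 : ℕ) = i then
    (if (q.2 : ℕ) < (q.1 : ℕ) then ccST k i (q.2 : ℕ) else - ccST k i (q.1 : ℕ)) else 0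

lemma ffST_deg (p : ℕ) (k : Type) [Field k] (i : ℕ) : ffST p k i ∈ degComp p k i := by
  rw [mem_degComp_ST]
  intro q hq
  simp only [ffST, if_neg hq]

lemma ffST_anti (p : ℕ) (k : Type) [Field k] (i : ℕ) (hodd : Odd i) :
    ffST p k i ∈ antisymmPart p k := by
  rw [mem_antisymmPart_ST]
  rintro ⟨a, b⟩
  simp only [ffST]
  by_cases hd : (a:ℕ) + (b:ℕ) = i
  · rw [if_pos (by omega), if_pos hd]
    rcases lt_trichotomy (a:ℕ) (b:ℕ) with h | h | h
    · rw [if_pos h, if_neg (by omega)]; ring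
    · exfalso; rcases hodd with ⟨m, hm⟩; omega
    · rw [if_neg (by omega), if_pos h]
  · rw [if_neg (by omega), if_neg hd]; ring

lemma eqn_ST (p : ℕ) (k : Type) [Field k] (h : Fin p × Fin p → k)
    (hker : wittOp2 p k (-1) h ∈ antisymmPrime p k) (a b : ℕ)
    (ha1 : 1 ≤ a) (hb1 : 1 ≤ b) (hap : a + 1 < p) (hbp : b + 1 < p) :
    (((a+1 : ℕ)) : k) * h (⟨a+1, hap⟩, ⟨b, by omega⟩) +
      (((b+1 : ℕ)) : k) * h (⟨a, by omega⟩, ⟨b+1, hbp⟩) = 0 := by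
  have hv := prime_vanish_ST p k _ hker (⟨a, by omega⟩, ⟨b, by omega⟩) ha1 hb1
  rw [wittE] at hv
  simp only [Fin.val_mk] at hv
  rw [dif_pos hap, dif_pos hbp] at hv
  push_cast at hv ⊢
  convert hv using 3

lemma ffST_ker (p : ℕ) (k : Type) [Field k] [CharP k p] (hp : p.Prime) (hp3 : 3 < p)
    (i : ℕ) (hodd : Odd i) (hi3 : 3 ≤ i) (hip : i ≤ p) :
    wittOp2 p k (-1) (ffST p k i) ∈ antisymmPrime p k := by
  have hdeg' := wittE_deg_ST p k i (by omega) _ (ffST_deg p k i)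
  apply mem_prime_of_ST p k (i-1) (by omega) (by omega)
  · exact wittE_anti_ST p k _ (ffST_anti p k i hodd)
  · exact hdeg'
  · rintro ⟨a, b⟩ h1 h2
    dsimp only at h1 h2
    by_cases hd : (a:ℕ) + (b:ℕ) = i - 1
    swap
    · exact hdeg' _ hd
    have hap : (a:ℕ) + 1 < p := by have := b.isLt; omega
    have hbp : (b:ℕ) + 1 < p := by have := a.isLt; omega
    rw [wittE]
    dsimp only
    rw [dif_pos hap, dif_pos hbp]
    simp only [ffST, Fin.val_mk]
    rw [if_pos (show (a:ℕ)+1+(b:ℕ) = i by omega), if_pos (show (a:ℕ)+((b:ℕ)+1) = i by omega)]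
    rcases lt_trichotomy (a:ℕ) (b:ℕ) with hab | hab | hab
    · -- a < b : both else branches
      rw [if_neg (by omega), if_neg (by omega)]
      have hrec := ccST_rec k i (a:ℕ) h1
        (natCast_ne_zero_ST p k hp ((a:ℕ)+1) (by omega) (by omega))
      rw [show i - (a:ℕ) = (b:ℕ)+1 by omega] at hrec
      push_cast at hrec ⊢
      linear_combination -hrec
    · -- a = b
      rw [if_pos (by omega), if_neg (by omega), hab]
      push_cast
      ring
    · -- b < a
      rw [if_pos (by omega)]
      have hba : (b:ℕ) + 1 ≠ (a:ℕ) := by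
        intro hcon
        rcases hodd with ⟨m, hm⟩
        omega
      rw [if_pos (show (b:ℕ)+1 < (a:ℕ) by omega)]
      have hrec := ccST_rec k i (b:ℕ) h2
        (natCast_ne_zero_ST p k hp ((b:ℕ)+1) (by omega) (by omega))
      rw [show i - (b:ℕ) = (a:ℕ)+1 by omega] at hrec
      push_cast at hrec ⊢
      linear_combination hrec

lemma wrap_ST (p : ℕ) (k : Type) [Field k] (i : ℕ) (hip : i ≤ p)
    (h : Fin p × Fin p → k) (hanti : h ∈ antisymmPart p k) (hdeg : h ∈ degComp p k i)
    (H : ∀ b : ℕ, 1 ≤ b → 2*b ≤ i → ∀ (hb : b < p) (ha : i - b < p),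
      h (⟨i-b, ha⟩, ⟨b, hb⟩) = 0) :
    ∀ q : Fin p × Fin p, 1 ≤ (q.1 : ℕ) → 1 ≤ (q.2 : ℕ) → h q = 0 := by
  rintro ⟨a, b⟩ h1 h2
  dsimp only at h1 h2 ⊢
  by_cases hd : (a:ℕ) + (b:ℕ) = i
  swap
  · exact hdeg _ hd
  rcases le_or_gt (2*(b:ℕ)) i with hle | hlt
  · have key := H (b:ℕ) h2 hle b.isLt (by omega)
    have e1 : ((⟨i - (b:ℕ), by omega⟩ : Fin p), (⟨(b:ℕ), b.isLt⟩ : Fin p)) = (a, b) := by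
      refine Prod.ext (Fin.ext ?_) (Fin.ext ?_) <;> dsimp only <;> omega
    rw [e1] at key
    exact key
  · have h2a : 2*(a:ℕ) ≤ i := by omega
    have key := H (a:ℕ) h1 h2a a.isLt (by omega)
    have e1 : ((⟨i - (a:ℕ), by omega⟩ : Fin p), (⟨(a:ℕ), a.isLt⟩ : Fin p)) = (b, a) := by
      refine Prod.ext (Fin.ext ?_) (Fin.ext ?_) <;> dsimp only <;> omega
    rw [e1] at key
    have hsw := hanti (a, b)
    dsimp only at hsw
    rw [key] at hsw
    exact neg_eq_zero.mp hsw.symm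

lemma odd_ind_ST (p : ℕ) (k : Type) [Field k] [CharP k p] (hp : p.Prime) (hp3 : 3 < p)
    (i : ℕ) (hi3 : 3 ≤ i) (hip : i ≤ p)
    (h : Fin p × Fin p → k) (hker : wittOp2 p k (-1) h ∈ antisymmPrime p k)
    (hbase : h (⟨i-1, by omega⟩, ⟨1, by omega⟩) = 0) :
    ∀ b : ℕ, 1 ≤ b → 2*b ≤ i → ∀ (hb : b < p) (ha : i - b < p),
      h (⟨i-b, ha⟩, ⟨b, hb⟩) = 0 := by
  intro b hb1
  induction b, hb1 using Nat.le_induction with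
  | base =>
    intro _ hb ha
    exact hbase
  | succ b hb1 ih =>
    intro h2b hbp hap
    have prev := ih (by omega) (by omega) (by omega)
    have E := eqn_ST p k h hker (i-1-b) b (by omega) hb1 (by omega) (by omega)
    have e1 : (⟨i-1-b+1, by omega⟩ : Fin p) = (⟨i-b, by omega⟩ : Fin p) :=
      Fin.ext (by dsimp only; omega)
    have e2 : (⟨i-1-b, by omega⟩ : Fin p) = (⟨i-(b+1), hap⟩ : Fin p) :=
      Fin.ext (by dsimp only; omega)
    rw [e1, e2, prev, mul_zero, zero_add] at E
    have hne : (((b+1 : ℕ)) : k) ≠ 0 :=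
      natCast_ne_zero_ST p k hp (b+1) (by omega) (by omega)
    have := mul_eq_zero.mp E
    tauto

lemma even_ind_ST (p : ℕ) (k : Type) [Field k] [CharP k p] (hp : p.Prime) (hp3 : 3 < p)
    (i : ℕ) (hi3 : 3 ≤ i) (hip : i ≤ p) (heven : Even i)
    (h : Fin p × Fin p → k) (hanti : h ∈ antisymmPart p k)
    (hker : wittOp2 p k (-1) h ∈ antisymmPrime p k) :
    ∀ b : ℕ, 1 ≤ b → 2*b ≤ i → ∀ (hb : b < p) (ha : i - b < p),
      h (⟨i-b, ha⟩, ⟨b, hb⟩) = 0 := by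
  have hilt : i < p := by
    rcases Nat.lt_or_ge i p with h' | h'
    · exact h'
    · exfalso
      have : i = p := by omega
      rcases heven with ⟨m, hm⟩
      have hop := hp.odd_of_ne_two (by omega)
      rcases hop with ⟨m', hm'⟩
      omega
  -- main claim by downward induction, phrased as induction on the distance d
  have main : ∀ d b : ℕ, b + d = i/2 → 1 ≤ b → ∀ (hb : b < p) (ha : i - b < p),
      h (⟨i-b, ha⟩, ⟨b, hb⟩) = 0 := by
    intro d
    induction d with
    | zero =>
      intro b hbd hb1 hb ha
      have hb2 : (b:ℕ) = i/2 := by omega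
      have hdd : i - b = b := by rcases heven with ⟨m, hm⟩; omega
      have e1 : (⟨i-b, ha⟩ : Fin p) = (⟨b, hb⟩ : Fin p) := Fin.ext (by dsimp only; omega)
      rw [e1]
      have hsw := hanti ((⟨b, hb⟩ : Fin p), (⟨b, hb⟩ : Fin p))
      dsimp only at hsw
      have h2 : (2 : k) ≠ 0 := by
        have := natCast_ne_zero_ST p k hp 2 (by omega) (by omega)
        simpa using this
      have : (2 : k) * h ((⟨b, hb⟩ : Fin p), (⟨b, hb⟩ : Fin p)) = 0 := by
        linear_combination hsw
      rcases mul_eq_zero.mp this with h' | h'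
      · exact absurd h' h2
      · exact h'
    | succ d ih =>
      intro b hbd hb1 hb ha
      have prev := ih (b+1) (by omega) (by omega) (by omega) (by omega)
      have E := eqn_ST p k h hker (i-1-b) b (by rcases heven with ⟨m, hm⟩; omega) hb1
        (by omega) (by omega)
      have e1 : (⟨i-1-b+1, by omega⟩ : Fin p) = (⟨i-b, ha⟩ : Fin p) :=
        Fin.ext (by dsimp only; omega)
      have e2 : (⟨i-1-b, by omega⟩ : Fin p) = (⟨i-(b+1), by omega⟩ : Fin p) :=
        Fin.ext (by dsimp only; omega)
      have e3 : (⟨b, by omega⟩ : Fin p) = (⟨b, hb⟩ : Fin p) := rfl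
      rw [e1, e2, prev, mul_zero, add_zero] at E
      have hne : (((i-1-b+1 : ℕ)) : k) ≠ 0 :=
        natCast_ne_zero_ST p k hp (i-1-b+1) (by omega) (by omega)
      rcases mul_eq_zero.mp E with h' | h'
      · exact absurd h' hne
      · exact h'
  intro b hb1 h2b hb ha
  exact main (i/2 - b) b (by omega) hb1 hb ha

/-- in the antisymmetric top level `A_a⁺ = A_a/A_a'` (realized as the
image of `A_a` in `A_{(2)}/A_a'`), graded by total degree, the kernel of `e_{-1}`
meets the degree-`i` component in a subspace of dimension `1` for odd `i` with
`3 ≤ i ≤ p`, and `0` for even `i` with `4 ≤ i ≤ p-1`. -/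
theorem antisymm_top_level_lowest_weight_dims (p : ℕ) (k : Type) [Field k] [IsAlgClosed k]
    [CharP k p] (hp : p.Prime) (hp3 : 3 < p)
    (hstab : antisymmPrime p k ≤ (antisymmPrime p k).comap (wittOp2 p k (-1))) :
    ∀ i : ℕ, 3 ≤ i → i ≤ p →
      Module.finrank k
        ↥(Submodule.map (antisymmPrime p k).mkQ (antisymmPart p k ⊓ degComp p k i) ⊓
          LinearMap.ker (Submodule.mapQ (antisymmPrime p k) (antisymmPrime p k)
            (wittOp2 p k (-1)) hstab)) =
        if Odd i then 1 else 0 := by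
  intro i hi3 hip
  rcases Nat.even_or_odd i with heven | hodd
  · -- even case : the space is ⊥
    rw [if_neg (Nat.not_odd_iff_even.mpr heven)]
    have hbot : Submodule.map (antisymmPrime p k).mkQ (antisymmPart p k ⊓ degComp p k i) ⊓
        LinearMap.ker (Submodule.mapQ (antisymmPrime p k) (antisymmPrime p k)
          (wittOp2 p k (-1)) hstab) = ⊥ := by
      rw [eq_bot_iff]
      rintro x ⟨hx1, hx2⟩
      obtain ⟨f, ⟨hfa, hfd⟩, rfl⟩ := hx1
      simp only [SetLike.mem_coe, LinearMap.mem_ker, Submodule.mkQ_apply, Submodule.mapQ_apply] at hx2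
      have hker : wittOp2 p k (-1) f ∈ antisymmPrime p k :=
        (Submodule.Quotient.mk_eq_zero _).mp hx2
      have hvan := wrap_ST p k i hip f hfa hfd
        (even_ind_ST p k hp hp3 i hi3 hip heven f hfa hker)
      have hmem : f ∈ antisymmPrime p k :=
        mem_prime_of_ST p k i (by omega) hip f hfa hfd hvan
      have : (antisymmPrime p k).mkQ f = 0 := by
        rw [Submodule.mkQ_apply]
        exact (Submodule.Quotient.mk_eq_zero _).mpr hmem
      simp [Submodule.mem_bot, this]
    rw [hbot]
    exact finrank_bot k _
  · -- odd case : the space is spanned by the class of ffST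
    rw [if_pos hodd]
    have hff1 : ffST p k i (⟨i-1, by omega⟩, ⟨1, by omega⟩) = 1 := by
      simp only [ffST]
      rw [if_pos (by omega), if_pos (by omega)]
      rfl
    have hx0ne : (antisymmPrime p k).mkQ (ffST p k i) ≠ 0 := by
      intro hcon
      rw [Submodule.mkQ_apply] at hcon
      have hmem : ffST p k i ∈ antisymmPrime p k := (Submodule.Quotient.mk_eq_zero _).mp hcon
      have := prime_vanish_ST p k _ hmem (⟨i-1, by omega⟩, ⟨1, by omega⟩)
        (by simp only [Fin.val_mk]; omega) (by simp only [Fin.val_mk]; omega)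
      rw [hff1] at this
      exact one_ne_zero this
    have hSpan : Submodule.map (antisymmPrime p k).mkQ (antisymmPart p k ⊓ degComp p k i) ⊓
        LinearMap.ker (Submodule.mapQ (antisymmPrime p k) (antisymmPrime p k)
          (wittOp2 p k (-1)) hstab) =
        Submodule.span k {(antisymmPrime p k).mkQ (ffST p k i)} := by
      apply le_antisymm
      · rintro x ⟨hx1, hx2⟩
        obtain ⟨f, ⟨hfa, hfd⟩, rfl⟩ := hx1
        simp only [SetLike.mem_coe, LinearMap.mem_ker, Submodule.mkQ_apply, Submodule.mapQ_apply] at hx2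
        have hker : wittOp2 p k (-1) f ∈ antisymmPrime p k :=
          (Submodule.Quotient.mk_eq_zero _).mp hx2
        set lam := f (⟨i-1, by omega⟩, ⟨1, by omega⟩) with hlam
        set h : Fin p × Fin p → k := f - lam • ffST p k i with hh
        have hha : h ∈ antisymmPart p k :=
          sub_mem hfa (Submodule.smul_mem _ _ (ffST_anti p k i hodd))
        have hhd : h ∈ degComp p k i :=
          sub_mem hfd (Submodule.smul_mem _ _ (ffST_deg p k i))
        have hhk : wittOp2 p k (-1) h ∈ antisymmPrime p k := by
          rw [hh, map_sub, map_smul]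
          exact sub_mem hker (Submodule.smul_mem _ _ (ffST_ker p k hp hp3 i hodd hi3 hip))
        have hbase : h (⟨i-1, by omega⟩, ⟨1, by omega⟩) = 0 := by
          rw [hh]
          simp only [Pi.sub_apply, Pi.smul_apply, smul_eq_mul]
          rw [hff1, hlam]
          ring
        have hvan := wrap_ST p k i hip h hha hhd
          (odd_ind_ST p k hp hp3 i hi3 hip h hhk hbase)
        have hmem : h ∈ antisymmPrime p k :=
          mem_prime_of_ST p k i (by omega) hip h hha hhd hvan
        have hq : ((antisymmPrime p k).mkQ) f = lam • ((antisymmPrime p k).mkQ) (ffST p k i) := by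
          have h0 : ((antisymmPrime p k).mkQ) h = 0 := by
            rw [Submodule.mkQ_apply]
            exact (Submodule.Quotient.mk_eq_zero _).mpr hmem
          rw [hh, map_sub, map_smul] at h0
          exact sub_eq_zero.mp h0
        rw [hq]
        exact Submodule.smul_mem _ _ (Submodule.mem_span_singleton_self _)
      · rw [Submodule.span_le, Set.singleton_subset_iff]
        refine ⟨?_, ?_⟩
        · exact Submodule.mem_map_of_mem ⟨ffST_anti p k i hodd, ffST_deg p k i⟩
        · rw [SetLike.mem_coe, LinearMap.mem_ker, Submodule.mkQ_apply, Submodule.mapQ_apply]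
          exact (Submodule.Quotient.mk_eq_zero _).mpr (ffST_ker p k hp hp3 i hodd hi3 hip)
    rw [hSpan]
    exact finrank_span_singleton hx0ne
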